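/- Let f_1,…,f_n : ℝ^d → ℝ be differentiable, λ_i > 0 for all i, p a proper sampling on [n], and θ = (θ_C)_{C⊆[n]} a bias-correcting family (∑_{C: i∈C} p_C θ_C^i = 1 for all i). Fix x ∈ ℝ^d and a point x* ∈ ℝ^d with ∑_{i=1}^n λ_i ∇f_i(x*) = 0, and vectors J_1,…,J_n ∈ ℝ^d. Define g(C) := ∑_{i=1}^n λ_i J_i + ∑_{i∈C} λ_i θ_C^i (∇f_i(x) − J_i). Then ∑_{C⊆[n]} p_C ‖g(C)‖^2 ≤ 2 ∑_{C⊆[n]} p_C |C| ∑_{i∈C} (θ_C^i λ_i)^2 ‖J_i − ∇f_i(x*)‖^2 + 2 ∑_{i=1}^n β_i λ_i^2 ‖∇f_i(x) − ∇f_i(x*)‖^2, where β_i := ∑_{C: i∈C} p_C |C| (θ_C^i)^2. -/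

import Mathlib

open Finset

private lemma swap_sum' {n : ℕ} {M : Type*} [AddCommMonoid M] (h : Finset (Fin n) → Fin n → M) :
    ∑ C : Finset (Fin n), ∑ i ∈ C, h C i
      = ∑ i : Fin n, ∑ C ∈ Finset.univ.filter (fun C => i ∈ C), h C i := by
  calc ∑ C : Finset (Fin n), ∑ i ∈ C, h C i
      = ∑ C : Finset (Fin n), ∑ i : Fin n, if i ∈ C then h C i else 0 := by
        refine Finset.sum_congr rfl fun C _ => ?_
        rw [Finset.sum_ite_mem, Finset.univ_inter]
    _ = ∑ i : Fin n, ∑ C : Finset (Fin n), if i ∈ C then h C i else 0 := Finset.sum_comm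
    _ = _ := by
        refine Finset.sum_congr rfl fun i _ => ?_
        rw [Finset.sum_filter]

private lemma cauchy_norm_sum {E : Type*} [NormedAddCommGroup E] [InnerProductSpace ℝ E]
    {ι : Type*} (C : Finset ι) (u : ι → E) :
    ‖∑ i ∈ C, u i‖ ^ 2 ≤ (C.card : ℝ) * ∑ i ∈ C, ‖u i‖ ^ 2 := by
  have h1 : ‖∑ i ∈ C, u i‖ ^ 2 ≤ (∑ i ∈ C, ‖u i‖) ^ 2 := by
    have := norm_sum_le C u
    nlinarith [norm_nonneg (∑ i ∈ C, u i)]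
  have h2 := sq_sum_le_card_mul_sum_sq (s := C) (f := fun i => ‖u i‖)
  push_cast at h2
  linarith

set_option maxHeartbeats 1000000 in
/-- second-moment bound for the SAGA-AS gradient estimate. -/
theorem stmt_5 (n d : ℕ) (f : Fin n → EuclideanSpace ℝ (Fin d) → ℝ)
    (hf : ∀ i, Differentiable ℝ (f i))
    (lam : Fin n → ℝ) (hlam : ∀ i, 0 < lam i)
    (p : Finset (Fin n) → ℝ) (hp0 : ∀ C, 0 ≤ p C) (hp1 : ∑ C : Finset (Fin n), p C = 1)
    (hproper : ∀ i : Fin n, 0 < ∑ C ∈ Finset.univ.filter (fun C => i ∈ C), p C)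
    (θ : Finset (Fin n) → Fin n → ℝ)
    (hθ : ∀ i : Fin n, ∑ C ∈ Finset.univ.filter (fun C => i ∈ C), p C * θ C i = 1)
    (β : Fin n → ℝ)
    (hβ : ∀ i, β i = ∑ C ∈ Finset.univ.filter (fun C => i ∈ C),
        p C * (C.card : ℝ) * (θ C i) ^ 2)
    (x xstar : EuclideanSpace ℝ (Fin d))
    (hxstar : ∑ i, lam i • gradient (f i) xstar = 0)
    (J : Fin n → EuclideanSpace ℝ (Fin d)) :
    ∑ C : Finset (Fin n),
        p C * ‖(∑ i, lam i • J i) + ∑ i ∈ C, (lam i * θ C i) • (gradient (f i) x - J i)‖ ^ 2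
      ≤ 2 * (∑ C : Finset (Fin n),
            p C * (C.card : ℝ) *
              ∑ i ∈ C, (θ C i * lam i) ^ 2 * ‖J i - gradient (f i) xstar‖ ^ 2)
        + 2 * ∑ i, β i * (lam i) ^ 2 *
            ‖gradient (f i) x - gradient (f i) xstar‖ ^ 2 := by
  classical
  set w : Fin n → EuclideanSpace ℝ (Fin d) := fun i => J i - gradient (f i) xstar with hw
  set v : Fin n → EuclideanSpace ℝ (Fin d) := fun i => gradient (f i) x - gradient (f i) xstar with hv
  set m : EuclideanSpace ℝ (Fin d) := ∑ i, lam i • w i with hmdef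
  set Y : Finset (Fin n) → EuclideanSpace ℝ (Fin d) := fun C => ∑ i ∈ C, (lam i * θ C i) • w i with hY
  set Z : Finset (Fin n) → EuclideanSpace ℝ (Fin d) := fun C => ∑ i ∈ C, (lam i * θ C i) • v i with hZ
  have hm : m = ∑ i, lam i • J i := by
    simp only [hmdef, hw, smul_sub, Finset.sum_sub_distrib, hxstar, sub_zero]
  -- decomposition
  have hg : ∀ C : Finset (Fin n),
      (∑ i, lam i • J i) + ∑ i ∈ C, (lam i * θ C i) • (gradient (f i) x - J i)
        = (m - Y C) + Z C := by
    intro C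
    have hvw : ∀ i, gradient (f i) x - J i = v i - w i := by
      intro i; simp only [hv, hw]; abel
    rw [← hm]
    simp only [hY, hZ, hvw, smul_sub, Finset.sum_sub_distrib]
    abel
  -- key unbiasedness
  have key1 : ∑ C : Finset (Fin n), p C • Y C = m := by
    have : ∑ C : Finset (Fin n), p C • Y C
        = ∑ C : Finset (Fin n), ∑ i ∈ C, (p C * (lam i * θ C i)) • w i := by
      refine Finset.sum_congr rfl fun C _ => ?_
      rw [hY, Finset.smul_sum]
      exact Finset.sum_congr rfl fun i _ => smul_smul _ _ _
    rw [this, swap_sum']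
    rw [hmdef]
    refine Finset.sum_congr rfl fun i _ => ?_
    rw [← Finset.sum_smul]
    congr 1
    have : ∑ C ∈ Finset.univ.filter (fun C => i ∈ C), p C * (lam i * θ C i)
        = lam i * ∑ C ∈ Finset.univ.filter (fun C => i ∈ C), p C * θ C i := by
      rw [Finset.mul_sum]; refine Finset.sum_congr rfl fun C _ => by ring
    rw [this, hθ i, mul_one]
  -- step B : variance bound
  have stepB : ∑ C : Finset (Fin n), p C * ‖m - Y C‖ ^ 2
      ≤ ∑ C : Finset (Fin n), p C * ‖Y C‖ ^ 2 := by
    have expand : ∀ C : Finset (Fin n),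
        p C * ‖m - Y C‖ ^ 2
          = p C * ‖m‖ ^ 2 - 2 * (p C * inner ℝ m (Y C)) + p C * ‖Y C‖ ^ 2 := by
      intro C
      rw [@norm_sub_sq_real]
      ring
    rw [Finset.sum_congr rfl fun C _ => expand C]
    rw [Finset.sum_add_distrib, Finset.sum_sub_distrib, ← Finset.mul_sum,
      ← Finset.sum_mul, hp1, one_mul]
    have hinner : ∑ C : Finset (Fin n), p C * inner ℝ m (Y C) = ‖m‖ ^ 2 := by
      have : ∑ C : Finset (Fin n), p C * inner ℝ m (Y C)
          = (inner ℝ m (∑ C : Finset (Fin n), p C • Y C) : ℝ) := by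
        rw [inner_sum]
        refine Finset.sum_congr rfl fun C _ => ?_
        rw [real_inner_smul_right]
      rw [this, key1, real_inner_self_eq_norm_sq]
    rw [hinner]
    nlinarith [sq_nonneg ‖m‖]
  -- step C/D : Cauchy-Schwarz per set
  have stepC : ∀ C : Finset (Fin n), ‖Y C‖ ^ 2
      ≤ (C.card : ℝ) * ∑ i ∈ C, (θ C i * lam i) ^ 2 * ‖w i‖ ^ 2 := by
    intro C
    have := cauchy_norm_sum C (fun i => (lam i * θ C i) • w i)
    rw [hY]
    refine this.trans_eq ?_
    congr 1
    refine Finset.sum_congr rfl fun i _ => ?_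
    rw [norm_smul, mul_pow, Real.norm_eq_abs, sq_abs]
    ring
  have stepD : ∀ C : Finset (Fin n), ‖Z C‖ ^ 2
      ≤ (C.card : ℝ) * ∑ i ∈ C, (θ C i * lam i) ^ 2 * ‖v i‖ ^ 2 := by
    intro C
    have := cauchy_norm_sum C (fun i => (lam i * θ C i) • v i)
    rw [hZ]
    refine this.trans_eq ?_
    congr 1
    refine Finset.sum_congr rfl fun i _ => ?_
    rw [norm_smul, mul_pow, Real.norm_eq_abs, sq_abs]
    ring
  -- step D2 : swap sums for the v-term
  have stepD2 : ∑ C : Finset (Fin n),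
        p C * ((C.card : ℝ) * ∑ i ∈ C, (θ C i * lam i) ^ 2 * ‖v i‖ ^ 2)
      = ∑ i, β i * (lam i) ^ 2 * ‖v i‖ ^ 2 := by
    have : ∑ C : Finset (Fin n),
          p C * ((C.card : ℝ) * ∑ i ∈ C, (θ C i * lam i) ^ 2 * ‖v i‖ ^ 2)
        = ∑ C : Finset (Fin n), ∑ i ∈ C,
            (p C * (C.card : ℝ) * (θ C i) ^ 2) * ((lam i) ^ 2 * ‖v i‖ ^ 2) := by
      refine Finset.sum_congr rfl fun C _ => ?_
      rw [Finset.mul_sum, Finset.mul_sum]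
      refine Finset.sum_congr rfl fun i _ => by ring
    rw [this, swap_sum']
    refine Finset.sum_congr rfl fun i _ => ?_
    rw [← Finset.sum_mul, ← hβ]
    ring
  -- combine
  calc ∑ C : Finset (Fin n),
        p C * ‖(∑ i, lam i • J i) + ∑ i ∈ C, (lam i * θ C i) • (gradient (f i) x - J i)‖ ^ 2
      = ∑ C : Finset (Fin n), p C * ‖(m - Y C) + Z C‖ ^ 2 := by
        refine Finset.sum_congr rfl fun C _ => by rw [hg C]
    _ ≤ ∑ C : Finset (Fin n), p C * (2 * ‖m - Y C‖ ^ 2 + 2 * ‖Z C‖ ^ 2) := by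
        refine Finset.sum_le_sum fun C _ => ?_
        refine mul_le_mul_of_nonneg_left ?_ (hp0 C)
        nlinarith [norm_add_le (m - Y C) (Z C), norm_nonneg (m - Y C), norm_nonneg (Z C),
          norm_nonneg ((m - Y C) + Z C), sq_nonneg (‖m - Y C‖ - ‖Z C‖)]
    _ = 2 * (∑ C : Finset (Fin n), p C * ‖m - Y C‖ ^ 2)
        + 2 * (∑ C : Finset (Fin n), p C * ‖Z C‖ ^ 2) := by
        rw [Finset.mul_sum, Finset.mul_sum, ← Finset.sum_add_distrib]
        exact Finset.sum_congr rfl fun C _ => by ring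
    _ ≤ 2 * (∑ C : Finset (Fin n), p C * ‖Y C‖ ^ 2)
        + 2 * (∑ C : Finset (Fin n), p C * ‖Z C‖ ^ 2) := by
        have := stepB; linarith
    _ ≤ 2 * (∑ C : Finset (Fin n),
            p C * ((C.card : ℝ) * ∑ i ∈ C, (θ C i * lam i) ^ 2 * ‖w i‖ ^ 2))
        + 2 * (∑ C : Finset (Fin n),
            p C * ((C.card : ℝ) * ∑ i ∈ C, (θ C i * lam i) ^ 2 * ‖v i‖ ^ 2)) := by
        have h1 : ∑ C : Finset (Fin n), p C * ‖Y C‖ ^ 2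
            ≤ ∑ C : Finset (Fin n),
                p C * ((C.card : ℝ) * ∑ i ∈ C, (θ C i * lam i) ^ 2 * ‖w i‖ ^ 2) :=
          Finset.sum_le_sum fun C _ => mul_le_mul_of_nonneg_left (stepC C) (hp0 C)
        have h2 : ∑ C : Finset (Fin n), p C * ‖Z C‖ ^ 2
            ≤ ∑ C : Finset (Fin n),
                p C * ((C.card : ℝ) * ∑ i ∈ C, (θ C i * lam i) ^ 2 * ‖v i‖ ^ 2) :=
          Finset.sum_le_sum fun C _ => mul_le_mul_of_nonneg_left (stepD C) (hp0 C)
        linarith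
    _ = 2 * (∑ C : Finset (Fin n),
            p C * (C.card : ℝ) *
              ∑ i ∈ C, (θ C i * lam i) ^ 2 * ‖J i - gradient (f i) xstar‖ ^ 2)
        + 2 * ∑ i, β i * (lam i) ^ 2 *
            ‖gradient (f i) x - gradient (f i) xstar‖ ^ 2 := by
        rw [stepD2]
        congr 1
        rw [hw]
        congr 1
        refine Finset.sum_congr rfl fun C _ => by rw [mul_assoc]
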